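/- Let P ∈ ℝ^{N×N} be a row-stochastic matrix and let α_1,...,α_N ∈ (0,1) with 𝒜 = diag(α_1,...,α_N). If 1/(max_k α_k) > max_j Σ_{i=1}^N P_{ij}, then ranking control holds for the node-dependent restart PageRank: for every strict total order ≺ on {1,...,N} there exists a probability vector w such that π_NPR(𝒜,w)_i < π_NPR(𝒜,w)_j whenever i ≺ j. -/

import Mathlib

open Matrix

/-- `P` is row-stochastic: nonnegative entries, each row summing to 1. -/
def IsStochastic {N : ℕ} (P : Matrix (Fin N) (Fin N) ℝ) : Prop :=
  (∀ i j, 0 ≤ P i j) ∧ ∀ i, ∑ j, P i j = 1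

/-- `v` is a probability vector: strictly positive entries summing to 1. -/
def IsProbVec {N : ℕ} (v : Fin N → ℝ) : Prop :=
  (∀ i, 0 < v i) ∧ ∑ i, v i = 1

/-- The node-dependent restart matrix `𝒜P + (I - 𝒜) e wᵀ`, with `𝒜 = diag(a)`. -/
def nprMatrix {N : ℕ} (a : Fin N → ℝ) (P : Matrix (Fin N) (Fin N) ℝ) (w : Fin N → ℝ) :
    Matrix (Fin N) (Fin N) ℝ :=
  Matrix.diagonal a * P + (1 - Matrix.diagonal a) * Matrix.of fun _ j => w j

/-- Let `P` be row-stochastic and `a i ∈ (0,1)` dampings with `𝒜 = diag(a)`.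
If `1/(max_k a_k) > max_j ∑_i P_{ij}` (i.e. `∑_i P_{ij} < 1/(⨆ k, a k)` for every `j`),
then ranking control holds for the node-dependent restart PageRank: for every strict total
order `≺` on the nodes there is a probability vector `w` whose node-dependent restart
PageRank `π` satisfies `π i < π j` whenever `i ≺ j`. -/
theorem npr_ranking_control {N : ℕ} [NeZero N] (P : Matrix (Fin N) (Fin N) ℝ)
    (hP : IsStochastic P) (a : Fin N → ℝ) (ha : ∀ i, a i ∈ Set.Ioo (0 : ℝ) 1)
    (hcond : ∀ j, ∑ i, P i j < 1 / (⨆ k, a k)) :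
    ∀ r : Fin N → Fin N → Prop, IsStrictTotalOrder (Fin N) r →
      ∃ w π : Fin N → ℝ, IsProbVec w ∧ IsProbVec π ∧
        Matrix.vecMul π (nprMatrix a P w) = π ∧
        ∀ i j, r i j → π i < π j := by
  classical
  obtain ⟨hPnn, hProw⟩ := hP
  intro r hr
  haveI hNE : Nonempty (Fin N) := Fin.pos_iff_nonempty.mp (Nat.pos_of_ne_zero (NeZero.ne N))
  -- rank function
  obtain ⟨rk, hrk_def⟩ :
      ∃ rk : Fin N → ℕ, rk = fun i => (Finset.univ.filter (fun k => r k i)).card := ⟨_, rfl⟩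
  have hrk : ∀ i j, r i j → rk i < rk j := by
    intro i j hij
    rw [hrk_def]
    apply Finset.card_lt_card
    constructor
    · intro k hk
      simp only [Finset.mem_filter, Finset.mem_univ, true_and] at hk ⊢
      exact hr.trans k i j hk hij
    · intro hsub
      have hi : i ∈ Finset.univ.filter (fun k => r k j) := by simp [hij]
      have h2 := hsub hi
      simp only [Finset.mem_filter, Finset.mem_univ, true_and] at h2
      exact hr.irrefl i h2
  have hrk_le : ∀ i, (rk i : ℝ) ≤ N := by
    intro i
    have h : rk i ≤ N := by
      calc rk i = (Finset.univ.filter (fun k => r k i)).card := by rw [hrk_def]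
      _ ≤ (Finset.univ : Finset (Fin N)).card := Finset.card_filter_le _ _
      _ = N := by simp
    exact_mod_cast h
  have hrk_nn : ∀ i, (0:ℝ) ≤ (rk i : ℝ) := fun i => Nat.cast_nonneg _
  -- max damping
  obtain ⟨A, hA_def⟩ : ∃ A : ℝ, A = ⨆ k, a k := ⟨_, rfl⟩
  rw [← hA_def] at hcond
  have hbdd : BddAbove (Set.range a) := (Set.finite_range a).bddAbove
  have hA_le : ∀ k, a k ≤ A := fun k => hA_def ▸ le_ciSup hbdd k
  obtain ⟨k0⟩ := hNE
  have hA_pos : 0 < A := lt_of_lt_of_le (ha k0).1 (hA_le k0)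
  have hS_nonneg : ∀ j, 0 ≤ ∑ i, P i j := fun j => Finset.sum_nonneg fun i _ => hPnn i j
  have hAS : ∀ j, A * (∑ i, P i j) < 1 := by
    intro j
    have h := hcond j
    rw [lt_div_iff₀ hA_pos] at h
    linarith
  have hASnn : ∀ j, 0 ≤ A * (∑ i, P i j) := fun j => mul_nonneg hA_pos.le (hS_nonneg j)
  -- margin
  have hne : (Finset.univ : Finset (Fin N)).Nonempty := Finset.univ_nonempty
  obtain ⟨δ, hδ_def⟩ :
      ∃ δ : ℝ, δ = Finset.univ.inf' hne (fun j => 1 - A * ∑ i, P i j) := ⟨_, rfl⟩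
  have hδ_pos : 0 < δ := by
    rw [hδ_def, Finset.lt_inf'_iff]
    intro j _
    linarith [hAS j]
  have hδ_le : ∀ j, δ ≤ 1 - A * ∑ i, P i j := by
    intro j
    rw [hδ_def]
    exact Finset.inf'_le _ (Finset.mem_univ j)
  have hN : (0:ℝ) < N := by exact_mod_cast Nat.pos_of_ne_zero (NeZero.ne N)
  -- perturbation size
  obtain ⟨ε, hε_def⟩ : ∃ ε : ℝ, ε = δ / (4 * (N:ℝ)^2) := ⟨_, rfl⟩
  have hε_pos : 0 < ε := by rw [hε_def]; positivity
  have hε4 : 4 * (N:ℝ) * ε = δ / (N:ℝ) := by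
    rw [hε_def]; field_simp
  have hεN : ε * N ≤ 1 / (4 * (N:ℝ)) := by
    have hδ_le1 : δ ≤ 1 := by linarith [hδ_le k0, hASnn k0]
    rw [hε_def, div_mul_eq_mul_div, div_le_div_iff₀ (by positivity) (by positivity)]
    nlinarith
  -- the target centrality
  obtain ⟨R, hR_def⟩ : ∃ R : ℝ, R = ∑ k, ((rk k : ℝ)) := ⟨_, rfl⟩
  have hR_nn : 0 ≤ R := hR_def ▸ Finset.sum_nonneg fun i _ => hrk_nn i
  have hR_le : R ≤ N * N := by
    rw [hR_def]
    calc ∑ k, ((rk k : ℝ)) ≤ ∑ _k : Fin N, (N:ℝ) := Finset.sum_le_sum fun i _ => hrk_le i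
    _ = N * N := by simp [Finset.sum_const, mul_comm]
  have hRN_le : R / N ≤ N := by rw [div_le_iff₀ hN]; linarith
  have hRN_nn : 0 ≤ R / N := div_nonneg hR_nn hN.le
  obtain ⟨π, hπ_def⟩ :
      ∃ π : Fin N → ℝ, π = fun i => 1/(N:ℝ) + ε * ((rk i : ℝ) - R / N) := ⟨_, rfl⟩
  have hπ_lb : ∀ i, 1/(N:ℝ) - ε * N ≤ π i := by
    intro i
    have h1 : -(N:ℝ) ≤ (rk i : ℝ) - R / N := by linarith [hrk_nn i]
    have h2 : ε * (-(N:ℝ)) ≤ ε * ((rk i:ℝ) - R/N) := mul_le_mul_of_nonneg_left h1 hε_pos.le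
    simp only [hπ_def]
    linarith
  have hπ_ub : ∀ i, π i ≤ 1/(N:ℝ) + ε * N := by
    intro i
    have h1 : (rk i : ℝ) - R / N ≤ N := by linarith [hrk_le i]
    have h2 : ε * ((rk i:ℝ) - R/N) ≤ ε * N := mul_le_mul_of_nonneg_left h1 hε_pos.le
    simp only [hπ_def]
    linarith
  have h4N : 1/(4*(N:ℝ)) < 1/N := by
    rw [div_lt_div_iff₀ (by positivity) hN]
    nlinarith
  have hπ_pos : ∀ i, 0 < π i := by
    intro i
    have := hπ_lb i
    linarith [hεN]
  have hπ_sum : ∑ i, π i = 1 := by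
    have hNne : (N:ℝ) ≠ 0 := ne_of_gt hN
    simp only [hπ_def]
    rw [Finset.sum_add_distrib, Finset.sum_const, Finset.card_univ, Fintype.card_fin,
        nsmul_eq_mul, ← Finset.mul_sum, Finset.sum_sub_distrib, Finset.sum_const,
        Finset.card_univ, Fintype.card_fin, nsmul_eq_mul, ← hR_def]
    field_simp
    ring
  -- the normalization constant
  obtain ⟨c, hc_def⟩ : ∃ c : ℝ, c = ∑ i, (1 - a i) * π i := ⟨_, rfl⟩
  have hc_pos : 0 < c := by
    rw [hc_def]
    exact Finset.sum_pos (fun i _ => mul_pos (by linarith [(ha i).2]) (hπ_pos i)) hne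
  -- positivity of the numerator of w
  have hnum : ∀ j, 0 < π j - ∑ i, a i * π i * P i j := by
    intro j
    have hb : ∑ i, a i * π i * P i j ≤ A * (1/N + ε*N) * (∑ i, P i j) := by
      rw [Finset.mul_sum]
      apply Finset.sum_le_sum
      intro i _
      have h1 : a i * π i ≤ A * (1/N + ε*N) :=
        mul_le_mul (hA_le i) (hπ_ub i) (hπ_pos i).le hA_pos.le
      exact mul_le_mul_of_nonneg_right h1 (hPnn i j)
    have hinvN : (0:ℝ) ≤ 1/(N:ℝ) := by positivity
    have h0 : 1/(N:ℝ) * δ ≤ 1/(N:ℝ) * (1 - A * ∑ i, P i j) :=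
      mul_le_mul_of_nonneg_left (hδ_le j) hinvN
    have h2 : (ε * N) * (A * ∑ i, P i j) ≤ (ε * N) * 1 :=
      mul_le_mul_of_nonneg_left (hAS j).le (by positivity)
    have h4 : 1/(N:ℝ) * δ = 4 * (N:ℝ) * ε := by
      rw [hε4]; field_simp
    nlinarith [hπ_lb j, hb, h0, h2, h4, mul_pos hε_pos hN]
  obtain ⟨w, hw_def⟩ :
      ∃ w : Fin N → ℝ, w = fun j => (π j - ∑ i, a i * π i * P i j) / c := ⟨_, rfl⟩
  have hw_pos : ∀ j, 0 < w j := by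
    intro j
    rw [hw_def]
    exact div_pos (hnum j) hc_pos
  have hw_sum : ∑ j, w j = 1 := by
    simp only [hw_def]
    rw [← Finset.sum_div, div_eq_one_iff_eq hc_pos.ne']
    rw [Finset.sum_sub_distrib, hπ_sum, Finset.sum_comm]
    have h1 : ∑ i, ∑ j, a i * π i * P i j = ∑ i, a i * π i := by
      apply Finset.sum_congr rfl
      intro i _
      rw [← Finset.mul_sum, hProw i, mul_one]
    rw [h1, hc_def,
      show (∑ i, (1 - a i) * π i) = ∑ i, (π i - a i * π i) from
        Finset.sum_congr rfl (fun i _ => by ring),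
      Finset.sum_sub_distrib, hπ_sum]
  have h1d : (1 - Matrix.diagonal a : Matrix (Fin N) (Fin N) ℝ)
      = Matrix.diagonal (fun k => 1 - a k) := by
    rw [← Matrix.diagonal_one, ← Matrix.diagonal_sub]
  have hM : ∀ i j, nprMatrix a P w i j = a i * P i j + (1 - a i) * w j := by
    intro i j
    simp [nprMatrix, h1d, Matrix.add_apply, Matrix.diagonal_mul]
  have hfix : Matrix.vecMul π (nprMatrix a P w) = π := by
    funext j
    simp only [Matrix.vecMul, dotProduct, hM]
    have e1 : ∀ i : Fin N, π i * (a i * P i j + (1 - a i) * w j)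
        = a i * π i * P i j + ((1 - a i) * π i) * w j := fun i => by ring
    simp only [e1]
    rw [Finset.sum_add_distrib, ← Finset.sum_mul, ← hc_def]
    have hcw : c * w j = π j - ∑ i, a i * π i * P i j := by
      rw [hw_def]
      field_simp
    linarith [hcw]
  have hmono : ∀ i j, r i j → π i < π j := by
    intro i j hij
    have h := hrk i j hij
    have hc' : (rk i : ℝ) < rk j := by exact_mod_cast h
    simp only [hπ_def]
    have hlt : ((rk i:ℝ) - R/(N:ℝ)) < ((rk j:ℝ) - R/(N:ℝ)) := by linarith
    have := mul_lt_mul_of_pos_left hlt hε_pos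
    linarith
  exact ⟨w, π, ⟨hw_pos, hw_sum⟩, ⟨hπ_pos, hπ_sum⟩, hfix, hmono⟩
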